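/- Let p0, p1 ∈ (0,1) and θ > 0 with θ ≠ 1. Define δ = (1 + (θ-1)(p0+p1))² - 4θ(θ-1)p0p1. Then δ > 0. -/
import Mathlib

theorem delta_pos (p0 p1 θ : ℝ) (hp0 : p0 ∈ Set.Ioo (0:ℝ) 1) (hp1 : p1 ∈ Set.Ioo (0:ℝ) 1)
    (hθ : 0 < θ) (hθ1 : θ ≠ 1) :
    0 < (1 + (θ - 1) * (p0 + p1)) ^ 2 - 4 * θ * (θ - 1) * p0 * p1 := by
  obtain ⟨h00, h01⟩ := hp0
  obtain ⟨h10, h11⟩ := hp1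
  rcases lt_or_gt_of_ne hθ1 with h | h
  · nlinarith [sq_nonneg (1 + (θ - 1) * (p0 + p1)), mul_pos h00 h10,
      mul_pos (mul_pos hθ h00) h10]
  · nlinarith [sq_nonneg (1 - (θ - 1) * (p0 - p1)),
      mul_pos (mul_pos (sub_pos.mpr h) h00) (sub_pos.mpr h01)]
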